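/- Let G be a uniquely 2-divisible metabelian group. Then for all x, y, z ∈ G: (1) [[x,y]^{1/2}, z] = [[x,y], z]^{1/2}, and (2) [x,y,z][z,x,y][y,z,x] = 1. -/

import Mathlib

private lemma sqrt_comm_aux {G : Type*} [Group G] (sq : G → G)
    (huniq : ∀ a b, b * b = a → b = sq a)
    (s c z : G) (hss : s * s = c) (hs : sq c = s)
    (htc : (s⁻¹ * z⁻¹ * s * z) * c = c * (s⁻¹ * z⁻¹ * s * z))
    (_hut : (s⁻¹ * (s⁻¹*z*s)⁻¹ * s * (s⁻¹*z*s)) * (s⁻¹ * z⁻¹ * s * z)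
         = (s⁻¹ * z⁻¹ * s * z) * (s⁻¹ * (s⁻¹*z*s)⁻¹ * s * (s⁻¹*z*s))) :
    s⁻¹ * z⁻¹ * s * z = sq (c⁻¹ * z⁻¹ * c * z) := by
  set t : G := s⁻¹ * z⁻¹ * s * z with ht
  set u : G := s⁻¹ * (s⁻¹*z*s)⁻¹ * s * (s⁻¹*z*s) with hu
  have h1 : s⁻¹ * t * s = u := by rw [ht, hu]; group
  have hcu : c⁻¹ * t * c = t := by
    calc c⁻¹ * t * c = c⁻¹ * (t * c) := by group
    _ = c⁻¹ * (c * t) := by rw [htc]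
    _ = t := by group
  have hust : s⁻¹ * u * s = t := by
    have e : s⁻¹ * u * s = c⁻¹ * t * c := by rw [← h1, ← hss]; group
    rw [e, hcu]
  have h2 : s⁻¹ * u⁻¹ * s = t⁻¹ := by rw [← hust]; group
  have hw2 : (s * (t * u⁻¹)) * (s * (t * u⁻¹)) = c := by
    have e : (s * (t * u⁻¹)) * (s * (t * u⁻¹))
        = (s * s) * ((s⁻¹ * t * s) * ((s⁻¹ * u⁻¹ * s) * (t * u⁻¹))) := by group
    rw [e, h1, h2, hss]
    group
  have h3 : s * (t * u⁻¹) = s := by rw [huniq c _ hw2, hs]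
  have h4 : t = u := by
    have h5 : t * u⁻¹ = 1 := mul_eq_left.mp h3
    rwa [mul_inv_eq_one] at h5
  refine huniq _ t ?_
  calc t * t = s⁻¹ * u * s * t := by rw [hust]
  _ = s⁻¹ * t * s * t := by rw [← h4]
  _ = (s*s)⁻¹ * z⁻¹ * (s*s) * z := by rw [ht]; group
  _ = c⁻¹ * z⁻¹ * c * z := by rw [hss]

/-- Let `G` be a uniquely 2-divisible metabelian group (all commutators commute
with each other).  With `[a,b] = a⁻¹b⁻¹ab`, for all `x, y, z`:
(1) `[[x,y]^{1/2}, z] = [[x,y], z]^{1/2}` and (2) `[x,y,z][z,x,y][y,z,x] = 1`. -/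
theorem metabelian_commutator_identities {G : Type*} [Group G] (sq : G → G)
    (hsq : ∀ a, sq a * sq a = a) (huniq : ∀ a b, b * b = a → b = sq a)
    (hmeta : ∀ a b c d : G,
      (a⁻¹ * b⁻¹ * a * b) * (c⁻¹ * d⁻¹ * c * d) =
        (c⁻¹ * d⁻¹ * c * d) * (a⁻¹ * b⁻¹ * a * b)) :
    ∀ x y z : G,
      ((sq (x⁻¹ * y⁻¹ * x * y))⁻¹ * z⁻¹ * sq (x⁻¹ * y⁻¹ * x * y) * z =
        sq ((x⁻¹ * y⁻¹ * x * y)⁻¹ * z⁻¹ * (x⁻¹ * y⁻¹ * x * y) * z)) ∧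
      ((x⁻¹ * y⁻¹ * x * y)⁻¹ * z⁻¹ * (x⁻¹ * y⁻¹ * x * y) * z) *
        ((z⁻¹ * x⁻¹ * z * x)⁻¹ * y⁻¹ * (z⁻¹ * x⁻¹ * z * x) * y) *
        ((y⁻¹ * z⁻¹ * y * z)⁻¹ * x⁻¹ * (y⁻¹ * z⁻¹ * y * z) * x) = 1 := by
  intro x y z
  constructor
  · exact sqrt_comm_aux sq huniq (sq (x⁻¹ * y⁻¹ * x * y)) (x⁻¹ * y⁻¹ * x * y) z
      (hsq _) rfl (hmeta _ z x y) (hmeta _ _ _ z)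
  · -- part 2
    set a : G := x⁻¹ * y⁻¹ * x * y with hadef
    set b : G := x⁻¹ * z⁻¹ * x * z with hbdef
    set c : G := y⁻¹ * z⁻¹ * y * z with hcdef
    set a' : G := (z⁻¹*x*z)⁻¹ * (z⁻¹*y*z)⁻¹ * (z⁻¹*x*z) * (z⁻¹*y*z) with hadef'
    set b' : G := (y⁻¹*x*y)⁻¹ * (y⁻¹*z*y)⁻¹ * (y⁻¹*x*y) * (y⁻¹*z*y) with hbdef'
    set c' : G := (x⁻¹*y*x)⁻¹ * (x⁻¹*z*x)⁻¹ * (x⁻¹*y*x) * (x⁻¹*z*x) with hcdef'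
    set k : Set G := {a, b, c, a', b', c'} with hk
    have hkc : ∀ u ∈ k, ∀ v ∈ k, u * v = v * u := by
      intro u hu v hv
      simp only [hk, Set.mem_insert_iff, Set.mem_singleton_iff] at hu hv
      rcases hu with rfl|rfl|rfl|rfl|rfl|rfl <;>
        rcases hv with rfl|rfl|rfl|rfl|rfl|rfl <;>
        simp only [hadef, hbdef, hcdef, hadef', hbdef', hcdef'] <;>
        exact hmeta _ _ _ _
    letI : CommGroup (Subgroup.closure k) := Subgroup.closureCommGroupOfComm hkc
    have hmem : ∀ w ∈ k, w ∈ Subgroup.closure k := fun w hw => Subgroup.subset_closure hw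
    set A : Subgroup.closure k := ⟨a, hmem a (by simp [hk])⟩ with hA
    set B : Subgroup.closure k := ⟨b, hmem b (by simp [hk])⟩ with hB
    set Cc : Subgroup.closure k := ⟨c, hmem c (by simp [hk])⟩ with hC
    set A' : Subgroup.closure k := ⟨a', hmem a' (by simp [hk])⟩ with hA'
    set B' : Subgroup.closure k := ⟨b', hmem b' (by simp [hk])⟩ with hB'
    set C' : Subgroup.closure k := ⟨c', hmem c' (by simp [hk])⟩ with hC'
    have key : C' * (B * A') = A * (B' * Cc) := by
      apply Subtype.ext
      show c' * (b * a') = a * (b' * c)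
      simp only [hadef, hbdef, hcdef, hadef', hbdef', hcdef']
      group
    have e2 : A' * (B * C') = A * (B' * Cc) := by rw [← key]; ac_rfl
    have hH : A⁻¹ * A' * (B * B'⁻¹ * (Cc⁻¹ * C')) = 1 := by
      calc A⁻¹ * A' * (B * B'⁻¹ * (Cc⁻¹ * C'))
          = (A' * (B * C')) * (Cc⁻¹ * (B'⁻¹ * A⁻¹)) := by ac_rfl
      _ = (A * (B' * Cc)) * (Cc⁻¹ * (B'⁻¹ * A⁻¹)) := by rw [e2]
      _ = 1 := by group
    have hG : a⁻¹ * a' * (b * b'⁻¹ * (c⁻¹ * c')) = 1 := by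
      have := Subtype.ext_iff.mp hH
      simpa [hA, hB, hC, hA', hB', hC'] using this
    calc ((x⁻¹ * y⁻¹ * x * y)⁻¹ * z⁻¹ * (x⁻¹ * y⁻¹ * x * y) * z) *
        ((z⁻¹ * x⁻¹ * z * x)⁻¹ * y⁻¹ * (z⁻¹ * x⁻¹ * z * x) * y) *
        ((y⁻¹ * z⁻¹ * y * z)⁻¹ * x⁻¹ * (y⁻¹ * z⁻¹ * y * z) * x)
        = a⁻¹ * a' * (b * b'⁻¹ * (c⁻¹ * c')) := by
          simp only [hadef, hbdef, hcdef, hadef', hbdef', hcdef']; group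
    _ = 1 := hG
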